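/- Fix L, N ∈ ℕ with N < L. For any two N-element subsets x, y of ℤ/Lℤ, the graph distance in the hard-core configuration graph satisfies d_L^N(x,y) = min over cyclic permutations σ of {1,...,N} of Σ_{j=1}^N d_L(x_j, y_{σ(j)}), where x_1 < ... < x_N and y_1 < ... < y_N are the elements of x and y listed in increasing order (as representatives in {0,...,L-1}), and moreover this minimum over cyclic permutations equals the minimum over all permutations of {1,...,N}. -/

import Mathlib

open Finset
open scoped Classical
open Fin.NatCast

noncomputable section

/-- Distance on the cycle `ℤ/L`. -/
def cycDist {L : ℕ} (a b : Fin L) : ℕ := min (a - b).val (b - a).val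

/-- Hard-core configuration graph: an edge moves one particle to a free neighbouring site. -/
def hcGraph (L : ℕ) [NeZero L] : SimpleGraph (Finset (Fin L)) where
  Adj x y := x.card = y.card ∧ ∃ j : Fin L, symmDiff x y = {j, j + ((1 : ℕ) : Fin L)}
  symm := by
    constructor
    rintro x y ⟨h1, j, h2⟩
    refine ⟨h1.symm, j, ?_⟩
    rw [symmDiff_comm]
    exact h2
  loopless := by
    constructor
    rintro x ⟨-, j, h2⟩
    have hj : j ∈ symmDiff x x := by rw [h2]; simp
    rw [symmDiff_self] at hj
    simp at hj

/-- Graph distance `d_L^N` on the hard-core configuration graph. -/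
def dN (L : ℕ) [NeZero L] (x y : Finset (Fin L)) : ℕ := (hcGraph L).dist x y

/-- The droplet (cluster of `N` consecutive sites) centred at `m`. -/
def droplet (L N : ℕ) [NeZero L] (m : Fin L) : Finset (Fin L) :=
  (Finset.range N).image fun i => m - (((N - 1) / 2 : ℕ) : Fin L) + (i : Fin L)

def isDroplet (L N : ℕ) [NeZero L] (c : Finset (Fin L)) : Prop := ∃ m : Fin L, c = droplet L N m

/-- Distance to the set of droplet configurations. -/
def distDrop (L N : ℕ) [NeZero L] (x : Finset (Fin L)) : ℕ :=
  sInf (Set.range fun m : Fin L => dN L x (droplet L N m))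

/-- Centres of droplets closest to `x`. -/
def WL (L N : ℕ) [NeZero L] (x : Finset (Fin L)) : Set (Fin L) :=
  {m : Fin L | dN L x (droplet L N m) = distDrop L N x}

/-- A path of length `k` from `x` to `y` in the configuration graph. -/
def IsPathN (L : ℕ) [NeZero L] (u : ℕ → Finset (Fin L)) (k : ℕ) (x y : Finset (Fin L)) : Prop :=
  u 0 = x ∧ u k = y ∧ ∀ l < k, (hcGraph L).Adj (u l) (u (l + 1))

/-- The particle-tracking of a path: the labelled positions `ũ`. -/
def IsTracking (L N : ℕ) [NeZero L] (u : ℕ → Finset (Fin L)) (k : ℕ) (ut : ℕ → Fin N → Fin L) : Prop :=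
  StrictMono (ut 0) ∧
  (∀ l ≤ k, u l = Finset.image (ut l) Finset.univ) ∧
  ∀ l < k, ∀ j : Fin N, (ut l j ∈ u (l + 1) → ut (l + 1) j = ut l j) ∧
    (ut l j ∉ u (l + 1) → ut (l + 1) j ∈ u (l + 1) \ u l)

/-- `L_j^u` : distance travelled by particle `j` along the tracked path. -/
def travel {L N : ℕ} (ut : ℕ → Fin N → Fin L) (k : ℕ) (j : Fin N) : ℕ :=
  ∑ l ∈ Finset.range k, cycDist (ut l j) (ut (l + 1) j)

/-- `I_-^u` : particles moving counter-clockwise. -/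
def Iminus {L N : ℕ} [NeZero L] (ut : ℕ → Fin N → Fin L) (k : ℕ) (j : Fin N) : Prop :=
  travel ut k j ≠ 0 ∧ ∃ l ≤ k, ut l j = ut 0 j - ((1 : ℕ) : Fin L)

/-- `I_+^u` : particles moving clockwise. -/
def Iplus {L N : ℕ} [NeZero L] (ut : ℕ → Fin N → Fin L) (k : ℕ) (j : Fin N) : Prop :=
  travel ut k j ≠ 0 ∧ ∃ l ≤ k, ut l j = ut 0 j + ((1 : ℕ) : Fin L)

/-- `I_0^u` : particles that do not move. -/
def I0 {L N : ℕ} (ut : ℕ → Fin N → Fin L) (k : ℕ) (j : Fin N) : Prop := travel ut k j = 0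

/-- The midpoint `M = ⌊(L-1)/2⌋` of the cycle. -/
def midL (L : ℕ) [NeZero L] : Fin L := (((L - 1) / 2 : ℕ) : Fin L)

/-- The sector of size `θ` around `m`, as a set. -/
def sector (L : ℕ) [NeZero L] (m : Fin L) (θ : ℝ) : Set (Fin L) :=
  {k : Fin L | (cycDist k m : ℝ) < θ * L}

/-- The sector of size `θ` around `m`, as a finset. -/
def secF (L : ℕ) [NeZero L] (m : Fin L) (θ : ℝ) : Finset (Fin L) :=
  Finset.univ.filter fun k => (cycDist k m : ℝ) < θ * L

open Fin.CommRing

set_option linter.unusedSectionVars false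
set_option maxHeartbeats 1000000

section A
variable {L : ℕ} [NeZero L]

lemma cycDist_self (a : Fin L) : cycDist a a = 0 := by simp [cycDist]

lemma cycDist_comm (a b : Fin L) : cycDist a b = cycDist b a := by
  simp [cycDist, min_comm]

lemma fin_val_add_le (u v : Fin L) : (u + v).val ≤ u.val + v.val := by
  have : (u + v).val = (u.val + v.val) % L := by simp [Fin.add_def]
  rw [this]; exact Nat.mod_le _ _

lemma fin_sub_natCast (u w : Fin L) (h : w.val ≤ u.val) :
    u - w = ((u.val - w.val : ℕ) : Fin L) := by
  have h2 : ((u.val - w.val : ℕ) : Fin L) + w = u := by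
    have h3 : ((u.val - w.val : ℕ) : Fin L) + ((w.val : ℕ) : Fin L) = ((u.val : ℕ) : Fin L) := by
      rw [← Nat.cast_add]; congr 1; omega
    simpa [Fin.cast_val_eq_self] using h3
  exact sub_eq_iff_eq_add.mpr h2.symm

lemma fin_natCast_val_le (k : ℕ) : ((k : Fin L)).val ≤ k := by
  have : ((k : Fin L)).val = k % L := Fin.val_natCast k L
  rw [this]; exact Nat.mod_le _ _

-- min over "difference" bound
lemma cycDist_le_sub (u w : Fin L) (a b : Fin L) (hu : a - b = u - w) :
    cycDist a b ≤ u.val + w.val := by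
  unfold cycDist
  rcases le_total w.val u.val with h | h
  · have : a - b = ((u.val - w.val : ℕ) : Fin L) := by rw [hu, fin_sub_natCast u w h]
    calc min (a-b).val (b-a).val ≤ (a-b).val := min_le_left _ _
      _ ≤ u.val - w.val := by rw [this]; exact fin_natCast_val_le _
      _ ≤ u.val + w.val := by omega
  · have hb : b - a = ((w.val - u.val : ℕ) : Fin L) := by
      have : b - a = w - u := by rw [← neg_sub, hu, neg_sub]
      rw [this, fin_sub_natCast w u h]
    calc min (a-b).val (b-a).val ≤ (b-a).val := min_le_right _ _
      _ ≤ w.val - u.val := by rw [hb]; exact fin_natCast_val_le _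
      _ ≤ u.val + w.val := by omega

lemma cycDist_triangle (a b c : Fin L) : cycDist a c ≤ cycDist a b + cycDist b c := by
  have h1 : cycDist a c ≤ (a-b).val + (b-c).val := by
    have : a - c = (a - b) + (b - c) := by ring
    calc cycDist a c ≤ (a-c).val := min_le_left _ _
      _ ≤ (a-b).val + (b-c).val := by rw [this]; exact fin_val_add_le _ _
  have h4 : cycDist a c ≤ (b-a).val + (c-b).val := by
    have : c - a = (c - b) + (b - a) := by ring
    calc cycDist a c ≤ (c-a).val := min_le_right _ _
      _ ≤ (c-b).val + (b-a).val := by rw [this]; exact fin_val_add_le _ _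
      _ = (b-a).val + (c-b).val := by omega
  have h2 : cycDist a c ≤ (a-b).val + (c-b).val :=
    cycDist_le_sub (a-b) (c-b) a c (by ring)
  have h3 : cycDist a c ≤ (b-a).val + (b-c).val := by
    have := cycDist_le_sub (b-c) (b-a) a c (by ring)
    omega
  unfold cycDist
  rcases min_cases (a-b).val (b-a).val with ⟨e1,-⟩|⟨e1,-⟩ <;>
    rcases min_cases (b-c).val (c-b).val with ⟨e2,-⟩|⟨e2,-⟩ <;>
      rw [e1, e2] <;> [exact h1; exact h2; exact h3; exact h4]

lemma cycDist_add_one (a : Fin L) : cycDist a (a+1) ≤ 1 := by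
  have : a - (a+1) = 0 - 1 := by ring
  have h := cycDist_le_sub 0 1 a (a+1) (by ring)
  simp only [Fin.val_zero, Fin.val_one'] at h
  exact h.trans (by simpa using Nat.mod_le 1 L)

lemma cycDist_sub_one (a : Fin L) : cycDist a (a-1) ≤ 1 := by
  have h := cycDist_le_sub 1 0 a (a-1) (by ring)
  simp only [Fin.val_zero, Fin.val_one'] at h
  exact h.trans (by simpa using Nat.mod_le 1 L)

end A

section B
variable {L : ℕ} [NeZero L]

/-- indicator -/
def ind {α : Type*} (p : Prop) [Decidable p] : ℤ := if p then 1 else 0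

def gf (x y : Finset (Fin L)) (i : ℕ) : ℤ :=
  ∑ s ∈ range (i+1),
    ((if ((s : ℕ) : Fin L) ∈ x then (1:ℤ) else 0) - (if ((s : ℕ) : Fin L) ∈ y then (1:ℤ) else 0))

def cost (x y : Finset (Fin L)) (c : ℤ) : ℕ := ∑ i ∈ range L, (gf x y i + c).natAbs

def Ew (x y : Finset (Fin L)) : ℕ := sInf (Set.range (cost x y))

lemma Ew_le (x y : Finset (Fin L)) (c : ℤ) : Ew x y ≤ cost x y c :=
  Nat.sInf_le ⟨c, rfl⟩

lemma Ew_exists (x y : Finset (Fin L)) : ∃ c, cost x y c = Ew x y :=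
  Nat.sInf_mem (Set.range_nonempty _)

lemma gf_succ (x y : Finset (Fin L)) (i : ℕ) :
    gf x y (i+1) = gf x y i +
      ((if ((i+1 : ℕ) : Fin L) ∈ x then (1:ℤ) else 0) - (if ((i+1 : ℕ) : Fin L) ∈ y then (1:ℤ) else 0)) := by
  unfold gf
  rw [Finset.sum_range_succ]

lemma sum_ind_card (x : Finset (Fin L)) :
    ∑ s ∈ range L, (if ((s : ℕ) : Fin L) ∈ x then (1:ℤ) else 0) = x.card := by
  have h := Fin.sum_univ_eq_sum_range (fun s => if ((s : ℕ) : Fin L) ∈ x then (1:ℤ) else 0) L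
  rw [← h]
  have : ∀ j : Fin L, (if ((j.val : ℕ) : Fin L) ∈ x then (1:ℤ) else 0) = if j ∈ x then 1 else 0 := by
    intro j; rw [Fin.cast_val_eq_self]
  rw [Finset.sum_congr rfl (fun j _ => this j)]
  rw [Finset.sum_ite_mem]
  simp

lemma gf_last (x y : Finset (Fin L)) (hcard : x.card = y.card) :
    gf x y (L - 1) = 0 := by
  have hL : L - 1 + 1 = L := Nat.succ_pred_eq_of_pos (NeZero.pos L)
  unfold gf
  rw [hL, Finset.sum_sub_distrib, sum_ind_card, sum_ind_card, hcard, sub_self]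

lemma gf_zero (x y : Finset (Fin L)) :
    gf x y 0 = (if (0 : Fin L) ∈ x then (1:ℤ) else 0) - (if (0 : Fin L) ∈ y then (1:ℤ) else 0) := by
  unfold gf
  rw [Finset.sum_range_one]
  norm_num

lemma gf_fin_succ (x y : Finset (Fin L)) (hcard : x.card = y.card) (i : Fin L) :
    gf x y ((i+1 : Fin L)).val = gf x y i.val +
      ((if (i+1 : Fin L) ∈ x then (1:ℤ) else 0) - (if (i+1 : Fin L) ∈ y then (1:ℤ) else 0)) := by
  rcases Nat.lt_or_ge (i.val + 1) L with h | h
  · have hv : ((i+1 : Fin L)).val = i.val + 1 := by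
      rw [Fin.add_def]; simp [Nat.mod_eq_of_lt h]
    have hc : ((i.val + 1 : ℕ) : Fin L) = i + 1 := by
      push_cast [Fin.cast_val_eq_self]; ring
    rw [hv, gf_succ, hc]
  · have hv : i.val = L - 1 := by have := i.isLt; omega
    have h0 : (i + 1 : Fin L) = 0 := by
      apply Fin.ext
      rw [Fin.add_def]
      have hL : L - 1 + 1 = L := by have := NeZero.pos L; omega
      simp [hv, hL]
    rw [h0, hv, gf_last x y hcard, Fin.val_zero, gf_zero]
    ring

lemma sum_ind_single (b : Fin L) (i : ℕ) (hi : i < L) :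
    ∑ s ∈ range (i+1), (if ((s : ℕ) : Fin L) = b then (1:ℤ) else 0)
      = if b.val ≤ i then 1 else 0 := by
  have hcongr : ∀ s ∈ range (i+1), (if ((s : ℕ) : Fin L) = b then (1:ℤ) else 0)
      = if s = b.val then 1 else 0 := by
    intro s hs
    rw [Finset.mem_range] at hs
    have hsl : s < L := by omega
    have hiff : (((s:ℕ) : Fin L) = b) ↔ (s = b.val) := by
      constructor <;> intro h
      · rw [← h]; simp [Fin.val_natCast, Nat.mod_eq_of_lt hsl]
      · rw [h, Fin.cast_val_eq_self]
    simp only [hiff]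
  rw [Finset.sum_congr rfl hcongr, Finset.sum_ite_eq' (range (i+1)) b.val (fun _ => (1:ℤ))]
  simp [Finset.mem_range, Nat.lt_succ_iff]

/-- effect of moving one particle from `a` to `b` on `gf`. -/
lemma gf_move (u y : Finset (Fin L)) (a b : Fin L) (ha : a ∈ u) (hb : b ∉ u) (i : ℕ) (hi : i < L) :
    gf (insert b (u.erase a)) y i
      = gf u y i + (if b.val ≤ i then 1 else 0) - (if a.val ≤ i then 1 else 0) := by
  have hmem : ∀ s : Fin L, (if s ∈ insert b (u.erase a) then (1:ℤ) else 0)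
      = (if s ∈ u then (1:ℤ) else 0) + (if s = b then 1 else 0) - (if s = a then 1 else 0) := by
    intro s
    have hab : a ≠ b := fun h => hb (h ▸ ha)
    by_cases hsb : s = b <;> by_cases hsa : s = a <;>
      simp_all [Finset.mem_insert, Finset.mem_erase]
  unfold gf
  have : ∀ s ∈ range (i+1),
      ((if ((s:ℕ):Fin L) ∈ insert b (u.erase a) then (1:ℤ) else 0) - (if ((s:ℕ):Fin L) ∈ y then (1:ℤ) else 0))
      = ((if ((s:ℕ):Fin L) ∈ u then (1:ℤ) else 0) - (if ((s:ℕ):Fin L) ∈ y then (1:ℤ) else 0))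
        + (if ((s:ℕ):Fin L) = b then (1:ℤ) else 0) - (if ((s:ℕ):Fin L) = a then (1:ℤ) else 0) := by
    intro s hs; rw [hmem]; ring
  rw [Finset.sum_congr rfl this]
  rw [Finset.sum_sub_distrib, Finset.sum_add_distrib, sum_ind_single b i hi, sum_ind_single a i hi]

end B

section C
variable {L : ℕ} [NeZero L]

lemma sdiff_card_eq {x y : Finset (Fin L)} (h : x.card = y.card) :
    (x \ y).card = (y \ x).card := by
  have h1 := Finset.card_sdiff_add_card_inter x y
  have h2 := Finset.card_sdiff_add_card_inter y x
  rw [Finset.inter_comm] at h2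
  omega

lemma hc_adj_move {x y : Finset (Fin L)} (h : (hcGraph L).Adj x y) :
    ∃ a b : Fin L, a ∈ x ∧ b ∉ x ∧ y = insert b (x.erase a) ∧ (b = a + 1 ∨ a = b + 1) := by
  obtain ⟨hcard, j, hsym⟩ := h
  rw [Nat.cast_one] at hsym
  set k := j + 1 with hk
  have hsd : symmDiff x y = (x \ y) ∪ (y \ x) := by
    rw [symmDiff_def]; rfl
  have hdisj : Disjoint (x \ y) (y \ x) := disjoint_sdiff_sdiff
  have hcards : (x \ y).card = (y \ x).card := sdiff_card_eq hcard
  have hjk : j ≠ k := by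
    intro hjk
    have : symmDiff x y = {j} := by rw [hsym, ← hjk]; simp
    have hodd : (symmDiff x y).card = 1 := by rw [this]; simp
    rw [hsd, Finset.card_union_of_disjoint hdisj] at hodd
    omega
  have hcard2 : (symmDiff x y).card = 2 := by
    rw [hsym, Finset.card_insert_of_notMem (by simp [hjk]), Finset.card_singleton]
  have hone : (x \ y).card = 1 ∧ (y \ x).card = 1 := by
    rw [hsd, Finset.card_union_of_disjoint hdisj] at hcard2
    omega
  obtain ⟨a, ha⟩ := Finset.card_eq_one.mp hone.1
  obtain ⟨b, hb⟩ := Finset.card_eq_one.mp hone.2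
  have hax : a ∈ x ∧ a ∉ y := by
    have : a ∈ x \ y := by rw [ha]; simp
    simpa [Finset.mem_sdiff] using this
  have hbx : b ∈ y ∧ b ∉ x := by
    have : b ∈ y \ x := by rw [hb]; simp
    simpa [Finset.mem_sdiff] using this
  have huniq : ∀ t, t ∈ x → t ∉ y → t = a := by
    intro t h1 h2
    have : t ∈ x \ y := Finset.mem_sdiff.mpr ⟨h1, h2⟩
    rw [ha] at this; simpa using this
  have huniq' : ∀ t, t ∈ y → t ∉ x → t = b := by
    intro t h1 h2
    have : t ∈ y \ x := Finset.mem_sdiff.mpr ⟨h1, h2⟩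
    rw [hb] at this; simpa using this
  have hab : a ≠ b := fun h => hbx.2 (h ▸ hax.1)
  refine ⟨a, b, hax.1, hbx.2, ?_, ?_⟩
  · ext t
    simp only [Finset.mem_insert, Finset.mem_erase]
    constructor
    · intro ht
      by_cases htx : t ∈ x
      · right; exact ⟨fun he => hax.2 (he ▸ ht), htx⟩
      · left; exact huniq' t ht htx
    · rintro (rfl | ⟨hta, htx⟩)
      · exact hbx.1
      · by_contra hty
        exact hta (huniq t htx hty)
  · have hpair : ({a, b} : Finset (Fin L)) = {j, k} := by
      rw [← hsym, hsd, ha, hb]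
      rfl
    have haj : a = j ∨ a = k := by
      have : a ∈ ({j, k} : Finset (Fin L)) := by rw [← hpair]; simp
      simpa using this
    have hbj : b = j ∨ b = k := by
      have : b ∈ ({j, k} : Finset (Fin L)) := by rw [← hpair]; simp
      simpa using this
    rcases haj with rfl | rfl
    · left
      rcases hbj with rfl | rfl
      · exact absurd rfl hab
      · rfl
    · right
      rcases hbj with rfl | rfl
      · rfl
      · exact absurd rfl hab

lemma hc_move_adj {x : Finset (Fin L)} {a b : Fin L} (ha : a ∈ x) (hb : b ∉ x)
    (hnb : b = a + 1 ∨ a = b + 1) :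
    (hcGraph L).Adj x (insert b (x.erase a)) := by
  have hab : a ≠ b := fun h => hb (h ▸ ha)
  have hbe : b ∉ x.erase a := fun h => hb (Finset.mem_of_mem_erase h)
  constructor
  · rw [Finset.card_insert_of_notMem hbe, Finset.card_erase_of_mem ha]
    have := Finset.card_pos.mpr ⟨a, ha⟩
    omega
  · have h1 : x \ insert b (x.erase a) = {a} := by
      ext t
      simp only [Finset.mem_sdiff, Finset.mem_insert, Finset.mem_erase, Finset.mem_singleton]
      constructor
      · rintro ⟨htx, hni⟩
        by_contra hta
        exact hni (Or.inr ⟨hta, htx⟩)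
      · rintro rfl
        exact ⟨ha, by simp [hab]⟩
    have h2 : insert b (x.erase a) \ x = {b} := by
      ext t
      simp only [Finset.mem_sdiff, Finset.mem_insert, Finset.mem_erase, Finset.mem_singleton]
      constructor
      · rintro ⟨ht, htx⟩
        rcases ht with rfl | ⟨-, htx'⟩
        · rfl
        · exact absurd htx' htx
      · rintro rfl
        exact ⟨Or.inl rfl, hb⟩
    have hsd : symmDiff x (insert b (x.erase a)) = {a, b} := by
      rw [symmDiff_def]
      show x \ insert b (x.erase a) ∪ insert b (x.erase a) \ x = _
      rw [h1, h2]
      rfl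
    rcases hnb with h | h
    · exact ⟨a, by rw [hsd, Nat.cast_one, ← h]⟩
    · refine ⟨b, ?_⟩
      rw [hsd, Nat.cast_one, ← h]
      exact Finset.pair_comm a b

end C

section D
variable {L : ℕ} [NeZero L]

lemma two_le_of_ne {a b : Fin L} (h : a ≠ b) : 2 ≤ L := by
  by_contra hL
  have h1 : L = 1 := by have := a.isLt; omega
  subst h1
  exact h (Subsingleton.elim a b)

lemma val_one_of_two_le (hL : 2 ≤ L) : (1 : Fin L).val = 1 := by
  rw [Fin.val_one']; exact Nat.mod_eq_of_lt hL

lemma val_add_one (a : Fin L) (hL : 2 ≤ L) : (a + 1).val = (a.val + 1) % L := by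
  rw [Fin.add_def, val_one_of_two_le hL]

/-- Moving a particle right: effect on `gf`. -/
lemma gf_move_right (u y : Finset (Fin L)) (a : Fin L) (ha : a ∈ u) (hb : a + 1 ∉ u) :
    ∃ κ : ℤ, ∀ c : ℤ, ∀ i < L, gf (insert (a+1) (u.erase a)) y i + (c - κ)
      = gf u y i + c - (if i = a.val then 1 else 0) := by
  have hL2 : 2 ≤ L := two_le_of_ne (a := a) (b := a + 1) (fun h => hb (by rw [← h]; exact ha))
  have hval : (a+1).val = (a.val+1) % L := val_add_one a hL2
  rcases lt_or_ge (a.val+1) L with h | h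
  · refine ⟨0, fun c i hi => ?_⟩
    rw [gf_move u y a (a+1) ha hb i hi]
    have hv : (a+1).val = a.val+1 := by rw [hval]; exact Nat.mod_eq_of_lt h
    rw [hv]; split_ifs <;> omega
  · have hLa : a.val + 1 = L := by have := a.isLt; omega
    refine ⟨1, fun c i hi => ?_⟩
    rw [gf_move u y a (a+1) ha hb i hi]
    have h0 : (a+1).val = 0 := by rw [hval, hLa, Nat.mod_self]
    rw [h0]; split_ifs <;> omega

/-- Moving a particle left: effect on `gf`. -/
lemma gf_move_left (u y : Finset (Fin L)) (b : Fin L) (ha : b + 1 ∈ u) (hb : b ∉ u) :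
    ∃ κ : ℤ, ∀ c : ℤ, ∀ i < L, gf (insert b (u.erase (b+1))) y i + (c - κ)
      = gf u y i + c + (if i = b.val then 1 else 0) := by
  have hL2 : 2 ≤ L := two_le_of_ne (a := b) (b := b + 1) (fun h => hb (by rw [h]; exact ha))
  have hval : (b+1).val = (b.val+1) % L := val_add_one b hL2
  rcases lt_or_ge (b.val+1) L with h | h
  · refine ⟨0, fun c i hi => ?_⟩
    rw [gf_move u y (b+1) b ha hb i hi]
    have hv : (b+1).val = b.val+1 := by rw [hval]; exact Nat.mod_eq_of_lt h
    rw [hv]; split_ifs <;> omega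
  · have hLb : b.val + 1 = L := by have := b.isLt; omega
    refine ⟨-1, fun c i hi => ?_⟩
    rw [gf_move u y (b+1) b ha hb i hi]
    have h0 : (b+1).val = 0 := by rw [hval, hLb, Nat.mod_self]
    rw [h0]; split_ifs <;> omega

/-- unified form for an arbitrary adjacency step. -/
lemma gf_adj (u v y : Finset (Fin L)) (h : (hcGraph L).Adj u v) :
    ∃ (e : ℕ) (s : ℤ) (κ : ℤ), e < L ∧ (s = 1 ∨ s = -1) ∧
      ∀ c : ℤ, ∀ i < L, gf v y i + (c - κ) = gf u y i + c + s * (if i = e then 1 else 0) := by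
  obtain ⟨a, b, ha, hb, rfl, hab⟩ := hc_adj_move h
  rcases hab with rfl | h1
  · obtain ⟨κ, hκ⟩ := gf_move_right u y a ha hb
    exact ⟨a.val, -1, κ, a.isLt, Or.inr rfl, fun c i hi => by rw [hκ c i hi]; ring⟩
  · obtain ⟨κ, hκ⟩ := gf_move_left u y b (h1 ▸ ha) hb
    rw [← h1] at hκ
    exact ⟨b.val, 1, κ, b.isLt, Or.inl rfl, fun c i hi => by rw [hκ c i hi]; ring⟩

lemma Ew_lipschitz {u v y : Finset (Fin L)} (h : (hcGraph L).Adj u v) :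
    Ew u y ≤ Ew v y + 1 := by
  obtain ⟨e, s, κ, heL, hs, heq⟩ := gf_adj u v y h
  obtain ⟨c0, hc0⟩ := Ew_exists v y
  have hcost : cost u y (c0 + κ) ≤ cost v y c0 + 1 := by
    unfold cost
    have hterm : ∀ i ∈ range L,
        (gf u y i + (c0 + κ)).natAbs ≤ (gf v y i + c0).natAbs + (if i = e then 1 else 0) := by
      intro i hi
      rw [Finset.mem_range] at hi
      have := heq (c0 + κ) i hi
      rcases hs with rfl | rfl <;> split_ifs at this ⊢ <;> omega
    calc ∑ i ∈ range L, (gf u y i + (c0 + κ)).natAbs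
        ≤ ∑ i ∈ range L, ((gf v y i + c0).natAbs + (if i = e then 1 else 0)) :=
          Finset.sum_le_sum hterm
      _ = (∑ i ∈ range L, (gf v y i + c0).natAbs) + ∑ i ∈ range L, (if i = e then 1 else 0) := by
          rw [Finset.sum_add_distrib]
      _ = (∑ i ∈ range L, (gf v y i + c0).natAbs) + 1 := by
          rw [Finset.sum_ite_eq' (range L) e (fun _ => 1)]
          simp [Finset.mem_range, heL]
  calc Ew u y ≤ cost u y (c0 + κ) := Ew_le u y _
    _ ≤ cost v y c0 + 1 := hcost
    _ = Ew v y + 1 := by rw [hc0]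

lemma Ew_self (y : Finset (Fin L)) : Ew y y = 0 := by
  have : cost y y 0 = 0 := by
    unfold cost gf
    simp
  have h := Ew_le y y 0
  omega

lemma Ew_eq_zero {x y : Finset (Fin L)} (hcard : x.card = y.card) (h : Ew x y = 0) :
    x = y := by
  obtain ⟨c, hc⟩ := Ew_exists x y
  rw [h] at hc
  have hall : ∀ i < L, gf x y i + c = 0 := by
    intro i hi
    have : (gf x y i + c).natAbs = 0 := by
      by_contra hne
      have h1 : 1 ≤ (gf x y i + c).natAbs := by omega
      have : 1 ≤ cost x y c := by
        unfold cost
        calc 1 ≤ (gf x y i + c).natAbs := h1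
          _ ≤ ∑ i ∈ range L, (gf x y i + c).natAbs :=
            Finset.single_le_sum (f := fun i => (gf x y i + c).natAbs)
              (fun _ _ => Nat.zero_le _) (Finset.mem_range.mpr hi)
      omega
    omega
  have hc0 : c = 0 := by
    have hlast := gf_last x y hcard
    have := hall (L-1) (by have := NeZero.pos L; omega)
    omega
  subst hc0
  ext t
  have key : ∀ i < L, (if ((i:ℕ) : Fin L) ∈ x then (1:ℤ) else 0) = (if ((i:ℕ):Fin L) ∈ y then 1 else 0) := by
    intro i hi
    induction i with
    | zero =>
      have := hall 0 (NeZero.pos L)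
      rw [gf_zero] at this
      push_cast
      omega
    | succ n ihn =>
      have h1 := hall (n+1) hi
      have h2 := hall n (by omega)
      rw [gf_succ] at h1
      omega
  have := key t.val t.isLt
  rw [Fin.cast_val_eq_self] at this
  split_ifs at this with h1 h2 h2
  · simp [h1, h2]
  · omega
  · omega
  · simp [h1, h2]

lemma cost_shift_down (x y : Finset (Fin L)) (c : ℤ) (hall : ∀ i < L, 1 ≤ gf x y i + c) :
    cost x y (c - 1) + L = cost x y c := by
  unfold cost
  have : ∀ i ∈ range L, (gf x y i + (c-1)).natAbs + 1 = (gf x y i + c).natAbs := by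
    intro i hi
    rw [Finset.mem_range] at hi
    have := hall i hi
    omega
  calc (∑ i ∈ range L, (gf x y i + (c-1)).natAbs) + L
      = ∑ i ∈ range L, ((gf x y i + (c-1)).natAbs + 1) := by
        rw [Finset.sum_add_distrib]; simp
    _ = ∑ i ∈ range L, (gf x y i + c).natAbs := Finset.sum_congr rfl this

lemma cost_shift_up (x y : Finset (Fin L)) (c : ℤ) (hall : ∀ i < L, gf x y i + c ≤ -1) :
    cost x y (c + 1) + L = cost x y c := by
  unfold cost
  have : ∀ i ∈ range L, (gf x y i + (c+1)).natAbs + 1 = (gf x y i + c).natAbs := by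
    intro i hi
    rw [Finset.mem_range] at hi
    have := hall i hi
    omega
  calc (∑ i ∈ range L, (gf x y i + (c+1)).natAbs) + L
      = ∑ i ∈ range L, ((gf x y i + (c+1)).natAbs + 1) := by
        rw [Finset.sum_add_distrib]; simp
    _ = ∑ i ∈ range L, (gf x y i + c).natAbs := Finset.sum_congr rfl this

end D

section E
variable {L : ℕ} [NeZero L]

lemma walk_pos (x y : Finset (Fin L)) (hcard : x.card = y.card) (hxlt : x.card < L)
    (c : ℤ) (i0 i1 : Fin L)
    (h0 : 1 ≤ gf x y i0.val + c) (h1 : gf x y i1.val + c ≤ 0) :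
    ∃ a : Fin L, 1 ≤ gf x y a.val + c ∧ a ∈ x ∧ a + 1 ∉ x := by
  have step := gf_fin_succ x y hcard
  -- Claim 1 : an occupied edge
  have claim1 : ∃ e : Fin L, 1 ≤ gf x y e.val + c ∧ e ∈ x := by
    by_contra hno
    push_neg at hno
    have aux : ∀ k : ℕ, 1 ≤ gf x y (i0 - (k : Fin L)).val + c := by
      intro k
      induction k with
      | zero => simpa using h0
      | succ n ihn =>
        set w := i0 - (n : Fin L) with hw
        have hwx : w ∉ x := hno w ihn
        have heq := step (w - 1)
        have hw1 : (w - 1) + 1 = w := by ring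
        rw [hw1] at heq
        have hcast : i0 - ((n+1 : ℕ) : Fin L) = w - 1 := by
          rw [hw]; push_cast; ring
        rw [hcast]
        simp only [hwx, if_false] at heq
        split_ifs at heq <;> omega
    have := aux ((i0 - i1).val)
    rw [Fin.cast_val_eq_self] at this
    have he : i0 - (i0 - i1) = i1 := by ring
    rw [he] at this
    omega
  obtain ⟨e, he1, he2⟩ := claim1
  by_contra hno2
  push_neg at hno2
  have aux2 : ∀ k : ℕ, 1 ≤ gf x y (e + (k : Fin L)).val + c ∧ (e + (k : Fin L)) ∈ x := by
    intro k
    induction k with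
    | zero => simpa using ⟨he1, he2⟩
    | succ n ihn =>
      set w := e + (n : Fin L) with hw
      have hwx : w + 1 ∈ x := hno2 w ihn.1 ihn.2
      have heq := step w
      simp only [hwx, if_true] at heq
      have hcast : e + ((n+1 : ℕ) : Fin L) = w + 1 := by
        rw [hw]; push_cast; ring
      rw [hcast]
      constructor
      · split_ifs at heq <;> omega
      · exact hwx
  have huniv : x = Finset.univ := by
    apply Finset.eq_univ_iff_forall.mpr
    intro t
    have := (aux2 ((t - e).val)).2
    rw [Fin.cast_val_eq_self] at this
    have he : e + (t - e) = t := by ring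
    rwa [he] at this
  rw [huniv, Finset.card_univ, Fintype.card_fin] at hxlt
  omega

lemma walk_neg (x y : Finset (Fin L)) (hcard : x.card = y.card) (hxlt : x.card < L)
    (c : ℤ) (i0 i1 : Fin L)
    (h0 : gf x y i0.val + c ≤ -1) (h1 : 0 ≤ gf x y i1.val + c) :
    ∃ a : Fin L, gf x y a.val + c ≤ -1 ∧ a + 1 ∈ x ∧ a ∉ x := by
  have step := gf_fin_succ x y hcard
  have claim1 : ∃ e : Fin L, gf x y e.val + c ≤ -1 ∧ e + 1 ∈ x := by
    by_contra hno
    push_neg at hno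
    have aux : ∀ k : ℕ, gf x y (i0 + (k : Fin L)).val + c ≤ -1 := by
      intro k
      induction k with
      | zero => simpa using h0
      | succ n ihn =>
        set w := i0 + (n : Fin L) with hw
        have hwx : w + 1 ∉ x := hno w ihn
        have heq := step w
        simp only [hwx, if_false] at heq
        have hcast : i0 + ((n+1 : ℕ) : Fin L) = w + 1 := by
          rw [hw]; push_cast; ring
        rw [hcast]
        split_ifs at heq <;> omega
    have := aux ((i1 - i0).val)
    rw [Fin.cast_val_eq_self] at this
    have he : i0 + (i1 - i0) = i1 := by ring
    rw [he] at this
    omega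
  obtain ⟨e, he1, he2⟩ := claim1
  by_contra hno2
  push_neg at hno2
  have aux2 : ∀ k : ℕ, gf x y (e - (k : Fin L)).val + c ≤ -1 ∧ ((e - (k : Fin L)) + 1) ∈ x := by
    intro k
    induction k with
    | zero => simpa using ⟨he1, he2⟩
    | succ n ihn =>
      set w := e - (n : Fin L) with hw
      have hwx : w ∈ x := hno2 w ihn.1 ihn.2
      have heq := step (w - 1)
      have hw1 : (w - 1) + 1 = w := by ring
      rw [hw1] at heq
      simp only [hwx, if_true] at heq
      have hcast : e - ((n+1 : ℕ) : Fin L) = w - 1 := by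
        rw [hw]; push_cast; ring
      rw [hcast, hw1]
      constructor
      · split_ifs at heq <;> omega
      · exact hwx
  have huniv : x = Finset.univ := by
    apply Finset.eq_univ_iff_forall.mpr
    intro t
    have := (aux2 ((e + 1 - t).val)).2
    rw [Fin.cast_val_eq_self] at this
    have he : e - (e + 1 - t) + 1 = t := by ring
    rwa [he] at this
  rw [huniv, Finset.card_univ, Fintype.card_fin] at hxlt
  omega

/-- existence of a cost-decreasing legal move. -/
lemma Ew_decreasing {x y : Finset (Fin L)} (hcard : x.card = y.card) (hxlt : x.card < L)
    (hpos : 0 < Ew x y) :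
    ∃ v : Finset (Fin L), (hcGraph L).Adj x v ∧ Ew v y + 1 ≤ Ew x y := by
  obtain ⟨c, hc⟩ := Ew_exists x y
  -- there is an index with nonzero value
  have hnz : ∃ i : Fin L, gf x y i.val + c ≠ 0 := by
    by_contra hno
    push_neg at hno
    have : cost x y c = 0 := by
      unfold cost
      apply Finset.sum_eq_zero
      intro i hi
      rw [Finset.mem_range] at hi
      have := hno ⟨i, hi⟩
      simp only at this
      omega
    omega
  -- not all ≥ 1
  have hnotallpos : ¬ (∀ i < L, 1 ≤ gf x y i + c) := by
    intro hall
    have h1 := cost_shift_down x y c hall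
    have h2 := Ew_le x y (c - 1)
    have := NeZero.pos L
    omega
  have hnotallneg : ¬ (∀ i < L, gf x y i + c ≤ -1) := by
    intro hall
    have h1 := cost_shift_up x y c hall
    have h2 := Ew_le x y (c + 1)
    have := NeZero.pos L
    omega
  push_neg at hnotallpos hnotallneg
  obtain ⟨j1, hj1L, hj1⟩ := hnotallpos
  obtain ⟨j2, hj2L, hj2⟩ := hnotallneg
  obtain ⟨i0, hi0⟩ := hnz
  rcases lt_or_ge 0 (gf x y i0.val + c) with hcase | hcase
  · -- positive case : move right
    obtain ⟨a, ha1, ha2, ha3⟩ := walk_pos x y hcard hxlt c i0 ⟨j1, hj1L⟩ (by omega) (by simp only [Fin.val_mk]; omega)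
    refine ⟨insert (a+1) (x.erase a), hc_move_adj ha2 ha3 (Or.inl rfl), ?_⟩
    obtain ⟨κ, hκ⟩ := gf_move_right x y a ha2 ha3
    have hcost : cost (insert (a+1) (x.erase a)) y (c - κ) + 1 = cost x y c := by
      unfold cost
      have hsplit : ∀ i ∈ range L,
          (gf (insert (a+1) (x.erase a)) y i + (c - κ)).natAbs + (if i = a.val then 1 else 0)
            = (gf x y i + c).natAbs := by
        intro i hi
        rw [Finset.mem_range] at hi
        have := hκ c i hi
        split_ifs at this ⊢ with h
        · subst h; omega
        · omega
      calc (∑ i ∈ range L, (gf (insert (a+1) (x.erase a)) y i + (c - κ)).natAbs) + 1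
          = ∑ i ∈ range L, ((gf (insert (a+1) (x.erase a)) y i + (c - κ)).natAbs
              + (if i = a.val then 1 else 0)) := by
            rw [Finset.sum_add_distrib, Finset.sum_ite_eq' (range L) a.val (fun _ => 1)]
            simp [Finset.mem_range, a.isLt]
        _ = ∑ i ∈ range L, (gf x y i + c).natAbs := Finset.sum_congr rfl hsplit
    have := Ew_le (insert (a+1) (x.erase a)) y (c - κ)
    omega
  · -- negative case : move left
    obtain ⟨a, ha1, ha2, ha3⟩ := walk_neg x y hcard hxlt c i0 ⟨j2, hj2L⟩ (by omega) (by simp only [Fin.val_mk]; omega)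
    refine ⟨insert a (x.erase (a+1)), hc_move_adj ha2 ha3 (Or.inr rfl), ?_⟩
    obtain ⟨κ, hκ⟩ := gf_move_left x y a ha2 ha3
    have hcost : cost (insert a (x.erase (a+1))) y (c - κ) + 1 = cost x y c := by
      unfold cost
      have hsplit : ∀ i ∈ range L,
          (gf (insert a (x.erase (a+1))) y i + (c - κ)).natAbs + (if i = a.val then 1 else 0)
            = (gf x y i + c).natAbs := by
        intro i hi
        rw [Finset.mem_range] at hi
        have := hκ c i hi
        split_ifs at this ⊢ with h
        · subst h; omega
        · omega
      calc (∑ i ∈ range L, (gf (insert a (x.erase (a+1))) y i + (c - κ)).natAbs) + 1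
          = ∑ i ∈ range L, ((gf (insert a (x.erase (a+1))) y i + (c - κ)).natAbs
              + (if i = a.val then 1 else 0)) := by
            rw [Finset.sum_add_distrib, Finset.sum_ite_eq' (range L) a.val (fun _ => 1)]
            simp [Finset.mem_range, a.isLt]
        _ = ∑ i ∈ range L, (gf x y i + c).natAbs := Finset.sum_congr rfl hsplit
    have := Ew_le (insert a (x.erase (a+1))) y (c - κ)
    omega

/-- `dN ≤ Ew` together with reachability. -/
lemma reach_and_dist_le (n : ℕ) : ∀ x y : Finset (Fin L), x.card = y.card → x.card < L →
    Ew x y = n → (hcGraph L).Reachable x y ∧ (hcGraph L).dist x y ≤ n := by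
  induction n using Nat.strong_induction_on with
  | _ n IH =>
    intro x y hcard hlt hE
    rcases Nat.eq_zero_or_pos n with rfl | hp
    · have := Ew_eq_zero hcard hE
      subst this
      exact ⟨SimpleGraph.Reachable.refl x, by rw [SimpleGraph.dist_self]⟩
    · obtain ⟨v, hadj, hdec⟩ := Ew_decreasing hcard hlt (by omega)
      have hcv : v.card = x.card := hadj.1.symm
      have ih := IH (Ew v y) (by omega) v y (by omega) (by omega) rfl
      refine ⟨hadj.reachable.trans ih.1, ?_⟩
      obtain ⟨p, hp⟩ := ih.1.exists_walk_length_eq_dist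
      have := SimpleGraph.dist_le (SimpleGraph.Walk.cons hadj p)
      rw [SimpleGraph.Walk.length_cons, hp] at this
      omega

lemma Ew_le_length {y : Finset (Fin L)} : ∀ {x : Finset (Fin L)} (p : (hcGraph L).Walk x y),
    Ew x y ≤ p.length := by
  intro x p
  induction p with
  | nil => rw [Ew_self]; exact Nat.zero_le _
  | @cons u v w hadj p ih =>
    have := Ew_lipschitz (y := w) hadj
    rw [SimpleGraph.Walk.length_cons]
    omega

lemma dN_eq_Ew {x y : Finset (Fin L)} (hcard : x.card = y.card) (hlt : x.card < L) :
    (hcGraph L).dist x y = Ew x y ∧ (hcGraph L).Reachable x y := by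
  obtain ⟨hreach, hle⟩ := reach_and_dist_le (Ew x y) x y hcard hlt rfl
  refine ⟨le_antisymm hle ?_, hreach⟩
  obtain ⟨p, hp⟩ := hreach.exists_walk_length_eq_dist
  rw [← hp]
  exact Ew_le_length p

end E

section F
variable {L : ℕ} [NeZero L]

def rflow (a b i : Fin L) : ℤ := if (i - a).val < (b - a).val then 1 else 0

lemma fin_pred_val (hL : 2 ≤ L) (w : Fin L) :
    (w - 1).val = if w.val = 0 then L - 1 else w.val - 1 := by
  have h := val_add_one (w - 1) hL
  rw [sub_add_cancel] at h
  set p := (w - 1).val with hp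
  have hpL : p < L := (w - 1).isLt
  have hwL : w.val < L := w.isLt
  rcases Nat.lt_or_ge (p + 1) L with h2 | h2
  · rw [Nat.mod_eq_of_lt h2] at h
    split_ifs <;> omega
  · have hpl : p + 1 = L := by omega
    rw [hpl, Nat.mod_self] at h
    split_ifs <;> omega

lemma rflow_div (a b i : Fin L) :
    rflow a b i - rflow a b (i - 1) = (if i = a then (1:ℤ) else 0) - (if i = b then 1 else 0) := by
  rcases Nat.lt_or_ge L 2 with hL | hL
  · have hL1 : L = 1 := by have := NeZero.pos L; omega
    subst hL1
    have h1 : i = a := Subsingleton.elim _ _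
    have h2 : i = b := Subsingleton.elim _ _
    have h3 : i - 1 = i := Subsingleton.elim _ _
    rw [h3]
    simp [h1, h2, h1.symm.trans h2]
  · set r := (b - a).val with hr
    set u := (i - a).val with hu
    have hpred : (i - 1 - a).val = if u = 0 then L - 1 else u - 1 := by
      have he : i - 1 - a = (i - a) - 1 := by ring
      rw [he, fin_pred_val hL, ← hu]
    have hia : (i = a) ↔ (u = 0) := by
      rw [hu]
      constructor
      · rintro rfl; simp
      · intro h
        exact sub_eq_zero.mp (Fin.ext (by simpa using h))
    have hib : (i = b) ↔ (u = r) := by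
      rw [hu, hr]
      constructor
      · rintro rfl; rfl
      · intro h
        have : i - a = b - a := Fin.val_injective h
        exact sub_left_injective this
    have hrL : r < L := (b - a).isLt
    have huL : u < L := (i - a).isLt
    unfold rflow
    rw [hpred, ← hu, ← hr]
    simp only [hia, hib]
    split_ifs <;> omega

lemma rflow_sum (a b : Fin L) :
    ∑ i : Fin L, (rflow a b i).natAbs = (b - a).val := by
  have h1 : ∀ i : Fin L, (rflow a b i).natAbs = if (i - a).val < (b - a).val then 1 else 0 := by
    intro i; unfold rflow; split_ifs <;> simp
  rw [Finset.sum_congr rfl (fun i _ => h1 i)]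
  rw [Fintype.sum_equiv (Equiv.subRight a) (fun i : Fin L => if (i - a).val < (b-a).val then (1:ℕ) else 0)
    (fun u : Fin L => if u.val < (b-a).val then (1:ℕ) else 0)
    (fun i => by simp [Equiv.subRight_apply])]
  have h2 : ∑ u : Fin L, (if u.val < (b-a).val then (1:ℕ) else 0)
      = ∑ k ∈ range L, (if k < (b-a).val then (1:ℕ) else 0) :=
    Fin.sum_univ_eq_sum_range (fun k => if k < (b-a).val then (1:ℕ) else 0) L
  rw [h2]
  rw [← Finset.sum_subset (Finset.range_subset_range.mpr (le_of_lt (b-a).isLt))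
    (fun k _ hk => by rw [Finset.mem_range] at hk; simp [if_neg hk])]
  have : ∀ k ∈ range ((b-a).val), (if k < (b-a).val then (1:ℕ) else 0) = 1 := by
    intro k hk; rw [Finset.mem_range] at hk; simp [hk]
  rw [Finset.sum_congr rfl this]
  simp

lemma const_of_div (J G : Fin L → ℤ) (hdiv : ∀ i : Fin L, J (i+1) - J i = G (i+1) - G i) :
    ∀ i : Fin L, J i = G i + (J 0 - G 0) := by
  have aux : ∀ k : ℕ, k < L → J (k : Fin L) = G (k : Fin L) + (J 0 - G 0) := by
    intro k
    induction k with
    | zero => intro _; push_cast; ring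
    | succ n ihn =>
      intro hn
      have h1 := ihn (by omega)
      have h2 := hdiv (n : Fin L)
      have hc : ((n+1 : ℕ) : Fin L) = (n : Fin L) + 1 := by push_cast; ring
      rw [hc]
      omega
  intro i
  have := aux i.val i.isLt
  rwa [Fin.cast_val_eq_self] at this

lemma natAbs_sum_le' {ι : Type*} (s : Finset ι) (f : ι → ℤ) :
    (∑ i ∈ s, f i).natAbs ≤ ∑ i ∈ s, (f i).natAbs := by
  induction s using Finset.cons_induction with
  | empty => simp
  | cons a s ha ih =>
    rw [Finset.sum_cons, Finset.sum_cons]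
    calc (f a + ∑ i ∈ s, f i).natAbs ≤ (f a).natAbs + (∑ i ∈ s, f i).natAbs :=
          Int.natAbs_add_le _ _
      _ ≤ (f a).natAbs + ∑ i ∈ s, (f i).natAbs := by omega

lemma wflow_div (p q i : Fin L) :
    (if (q - p).val ≤ (p - q).val then rflow p q i else - rflow q p i)
    - (if (q - p).val ≤ (p - q).val then rflow p q (i-1) else - rflow q p (i-1))
    = (if i = p then (1:ℤ) else 0) - (if i = q then 1 else 0) := by
  rcases le_or_gt (q - p).val (p - q).val with h | h
  · rw [if_pos h, if_pos h]
    exact rflow_div p q i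
  · rw [if_neg (not_le.mpr h), if_neg (not_le.mpr h)]
    have h2 := rflow_div q p i
    omega

lemma wflow_sum (p q : Fin L) :
    ∑ i : Fin L, (if (q - p).val ≤ (p - q).val then rflow p q i else - rflow q p i).natAbs
      = cycDist p q := by
  split_ifs with h
  · rw [rflow_sum]
    exact (min_eq_right h).symm
  · have hn : ∀ i : Fin L, (- rflow q p i).natAbs = (rflow q p i).natAbs :=
      fun i => Int.natAbs_neg _
    rw [Finset.sum_congr rfl (fun i _ => hn i), rflow_sum]
    exact (min_eq_left (le_of_lt (not_le.mp h))).symm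

/-- key flow lower bound : `Ew` is at most the transport cost of any matching. -/
lemma Ew_le_sum {N : ℕ} (x y : Finset (Fin L)) (hcard : x.card = y.card)
    (f g : Fin N → Fin L)
    (hf : ∀ i : Fin L, (if i ∈ x then (1:ℤ) else 0) = ∑ j : Fin N, (if i = f j then 1 else 0))
    (hg : ∀ i : Fin L, (if i ∈ y then (1:ℤ) else 0) = ∑ j : Fin N, (if i = g j then 1 else 0)) :
    Ew x y ≤ ∑ j : Fin N, cycDist (f j) (g j) := by
  classical
  set W : Fin N → Fin L → ℤ := fun j i =>
    if (g j - f j).val ≤ (f j - g j).val then rflow (f j) (g j) i else - rflow (g j) (f j) i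
    with hW
  set J : Fin L → ℤ := fun i => ∑ j : Fin N, W j i with hJ
  have hWdiv : ∀ j (i : Fin L), W j i - W j (i - 1)
      = (if i = f j then (1:ℤ) else 0) - (if i = g j then 1 else 0) :=
    fun j i => wflow_div (f j) (g j) i
  have hJdiv : ∀ i : Fin L, J (i+1) - J i
      = (if (i+1) ∈ x then (1:ℤ) else 0) - (if (i+1) ∈ y then 1 else 0) := by
    intro i
    rw [hJ]
    simp only []
    rw [← Finset.sum_sub_distrib]
    have : ∀ j ∈ (univ : Finset (Fin N)), W j (i+1) - W j i
        = (if (i+1) = f j then (1:ℤ) else 0) - (if (i+1) = g j then 1 else 0) := by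
      intro j _
      have := hWdiv j (i+1)
      rwa [add_sub_cancel_right] at this
    rw [Finset.sum_congr rfl this, Finset.sum_sub_distrib, ← hf, ← hg]
  have hGdiv := gf_fin_succ x y hcard
  set G : Fin L → ℤ := fun i => gf x y i.val with hG
  have hconst : ∀ i : Fin L, J i = G i + (J 0 - G 0) := by
    apply const_of_div
    intro i
    rw [hJdiv i]
    have := hGdiv i
    rw [hG]
    simp only []
    omega
  set c : ℤ := J 0 - G 0 with hc
  have hcost : cost x y c = ∑ i : Fin L, (J i).natAbs := by
    unfold cost
    rw [← Fin.sum_univ_eq_sum_range (fun k => (gf x y k + c).natAbs) L]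
    apply Finset.sum_congr rfl
    intro i _
    rw [hconst i, hG]
  have hbound : ∑ i : Fin L, (J i).natAbs ≤ ∑ j : Fin N, cycDist (f j) (g j) := by
    calc ∑ i : Fin L, (J i).natAbs ≤ ∑ i : Fin L, ∑ j : Fin N, (W j i).natAbs :=
          Finset.sum_le_sum (fun i _ => natAbs_sum_le' _ _)
      _ = ∑ j : Fin N, ∑ i : Fin L, (W j i).natAbs := Finset.sum_comm
      _ = ∑ j : Fin N, cycDist (f j) (g j) :=
          Finset.sum_congr rfl (fun j _ => wflow_sum (f j) (g j))
  calc Ew x y ≤ cost x y c := Ew_le x y c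
    _ ≤ ∑ j : Fin N, cycDist (f j) (g j) := by rw [hcost]; exact hbound

lemma ind_mem_eq_sum {N : ℕ} (s : Finset (Fin L)) (hs : s.card = N) (i : Fin L) :
    (if i ∈ s then (1:ℤ) else 0) = ∑ j : Fin N, (if i = s.orderEmbOfFin hs j then 1 else 0) := by
  classical
  by_cases hi : i ∈ s
  · have : (i : Fin L) ∈ Set.range (s.orderEmbOfFin hs) := by
      rw [Finset.range_orderEmbOfFin]; exact hi
    obtain ⟨j0, hj0⟩ := this
    have hcond : ∀ j : Fin N, (i = s.orderEmbOfFin hs j) ↔ (j = j0) := by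
      intro j
      constructor
      · intro h
        exact (s.orderEmbOfFin hs).injective (by rw [← h, hj0])
      · rintro rfl; exact hj0.symm
    simp only [hcond, hi, if_true]
    rw [Finset.sum_ite_eq' univ j0 (fun _ => (1:ℤ))]
    simp
  · rw [if_neg hi]
    symm
    apply Finset.sum_eq_zero
    intro j _
    rw [if_neg]
    intro h
    exact hi (h ▸ s.orderEmbOfFin_mem hs j)

end F

section G1
variable {L : ℕ} [NeZero L]

lemma sum_ite_emb_le_one {N : ℕ} (x : Finset (Fin L)) (hx : x.card = N) (a : Fin L) :
    ∑ j : Fin N, (if x.orderEmbOfFin hx j = a then (1:ℕ) else 0) ≤ 1 := by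
  classical
  by_cases hi : a ∈ x
  · obtain ⟨j0, hj0⟩ : ∃ j0, x.orderEmbOfFin hx j0 = a := by
      have : a ∈ Set.range (x.orderEmbOfFin hx) := by
        rw [Finset.range_orderEmbOfFin]; exact hi
      exact this
    have hcond : ∀ j, (x.orderEmbOfFin hx j = a) ↔ (j = j0) := fun j =>
      ⟨fun h => (x.orderEmbOfFin hx).injective (h.trans hj0.symm), fun h => h ▸ hj0⟩
    simp only [hcond]
    rw [Finset.sum_ite_eq' univ j0 (fun _ => (1:ℕ))]
    simp
  · have hz : ∀ j ∈ (univ : Finset (Fin N)), (if x.orderEmbOfFin hx j = a then (1:ℕ) else 0) = 0 := by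
      intro j _
      rw [if_neg]
      intro h
      exact hi (h ▸ x.orderEmbOfFin_mem hx j)
    rw [Finset.sum_congr rfl hz]
    simp

lemma rel_mid {N : ℕ} (x x' : Finset (Fin L)) (hx : x.card = N) (hx' : x'.card = N)
    (a b : Fin L) (ha : a ∈ x) (hb : b ∉ x) (hdef : x' = insert b (x.erase a))
    (hv : b.val = a.val + 1 ∨ a.val = b.val + 1) (hcd : cycDist a b ≤ 1) :
    ∀ j : Fin N, cycDist (x.orderEmbOfFin hx j) (x'.orderEmbOfFin hx' j)
      ≤ (if x.orderEmbOfFin hx j = a then 1 else 0) := by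
  classical
  set f : Fin N → Fin L := fun j => x.orderEmbOfFin hx j with hf
  have hmono : StrictMono f := (x.orderEmbOfFin hx).strictMono
  have hfx : ∀ j, f j ∈ x := fun j => x.orderEmbOfFin_mem hx j
  set g : Fin N → Fin L := fun j => if f j = a then b else f j with hg
  have hkey : ∀ t, t ∈ x → t ≠ a →
      ((t.val < a.val → t.val < b.val) ∧ (a.val < t.val → b.val < t.val)) := by
    intro t ht hta
    have htb : t ≠ b := fun h => hb (h ▸ ht)
    have h1 : t.val ≠ b.val := fun h => htb (Fin.ext h)
    have h2 : t.val ≠ a.val := fun h => hta (Fin.ext h)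
    rcases hv with h3 | h3 <;> constructor <;> intro h4 <;> omega
  have hgmono : StrictMono g := by
    intro j j' hlt
    have hff : (f j).val < (f j').val := hmono hlt
    rw [Fin.lt_def]
    rw [hg]
    simp only []
    by_cases h1 : f j = a <;> by_cases h2 : f j' = a
    · exact absurd (hmono.injective (h1.trans h2.symm)) (ne_of_lt hlt)
    · rw [if_pos h1, if_neg h2]
      have := (hkey (f j') (hfx j') h2).2 (by rw [← h1]; exact hff)
      exact this
    · rw [if_neg h1, if_pos h2]
      have := (hkey (f j) (hfx j) h1).1 (by rw [← h2]; exact hff)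
      exact this
    · rw [if_neg h1, if_neg h2]
      exact hff
  have hgx' : ∀ j, g j ∈ x' := by
    intro j
    rw [hdef, hg]
    simp only []
    by_cases h1 : f j = a
    · rw [if_pos h1]; exact Finset.mem_insert_self _ _
    · rw [if_neg h1]
      exact Finset.mem_insert_of_mem (Finset.mem_erase.mpr ⟨h1, hfx j⟩)
  have huniq : g = x'.orderEmbOfFin hx' := Finset.orderEmbOfFin_unique hx' hgx' hgmono
  intro j
  rw [← congrFun huniq j, hg]
  simp only []
  by_cases h1 : f j = a
  · rw [if_pos h1, if_pos h1, show (x.orderEmbOfFin hx) j = a from h1]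
    exact hcd
  · rw [if_neg h1, if_neg h1, cycDist_self]

lemma rel_wrapR {N : ℕ} (x x' : Finset (Fin L)) (hx : x.card = N) (hx' : x'.card = N)
    (a b : Fin L) (ha : a ∈ x) (hb : b ∉ x) (hdef : x' = insert b (x.erase a))
    (hav : a.val = L - 1) (hbv : b.val = 0) (hcd : cycDist a b ≤ 1) :
    ∃ r : Fin N, ∀ j : Fin N, cycDist (x.orderEmbOfFin hx j) (x'.orderEmbOfFin hx' (j + r))
      ≤ (if x.orderEmbOfFin hx j = a then 1 else 0) := by
  classical
  have hN : 0 < N := by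
    rw [← hx]; exact Finset.card_pos.mpr ⟨a, ha⟩
  set f : Fin N → Fin L := fun j => x.orderEmbOfFin hx j with hf
  have hmono : StrictMono f := (x.orderEmbOfFin hx).strictMono
  have hfx : ∀ j, f j ∈ x := fun j => x.orderEmbOfFin_mem hx j
  have hfb : ∀ j, f j ≠ b := fun j h => hb (h ▸ hfx j)
  have hja : ∀ j : Fin N, f j = a → j.val = N - 1 := by
    intro j hj
    by_contra hne
    have hlt : j.val + 1 < N := by have := j.isLt; omega
    have hlt2 : (f j).val < (f ⟨j.val + 1, hlt⟩).val := by
      apply hmono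
      rw [Fin.lt_def]
      simp
    have := (f ⟨j.val + 1, hlt⟩).isLt
    rw [hj] at hlt2
    omega
  obtain ⟨ja, hja0⟩ : ∃ ja, f ja = a := by
    have : a ∈ Set.range (x.orderEmbOfFin hx) := by
      rw [Finset.range_orderEmbOfFin]; exact ha
    exact this
  have hlast : f ⟨N - 1, by omega⟩ = a := by
    have h1 := hja ja hja0
    have h2 : (⟨N - 1, by omega⟩ : Fin N) = ja := Fin.ext h1.symm
    rw [h2]; exact hja0
  set g : Fin N → Fin L := fun k =>
    if hk : k.val = 0 then b else f ⟨k.val - 1, by have := k.isLt; omega⟩ with hg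
  have hgmono : StrictMono g := by
    intro k k' hlt
    rw [Fin.lt_def] at hlt ⊢
    rw [hg]
    simp only []
    by_cases h1 : k.val = 0
    · rw [dif_pos h1]
      have h2 : k'.val ≠ 0 := by omega
      rw [dif_neg h2]
      have h3 := hfb ⟨k'.val - 1, by have := k'.isLt; omega⟩
      have h4 : (f ⟨k'.val - 1, by have := k'.isLt; omega⟩).val ≠ b.val :=
        fun h => h3 (Fin.ext h)
      omega
    · rw [dif_neg h1]
      have h2 : k'.val ≠ 0 := by omega
      rw [dif_neg h2]
      apply hmono
      rw [Fin.lt_def]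
      simp only []
      omega
  have hgx' : ∀ k, g k ∈ x' := by
    intro k
    rw [hdef, hg]
    simp only []
    by_cases h1 : k.val = 0
    · rw [dif_pos h1]; exact Finset.mem_insert_self _ _
    · rw [dif_neg h1]
      apply Finset.mem_insert_of_mem
      apply Finset.mem_erase.mpr
      refine ⟨?_, hfx _⟩
      intro h
      have := hja _ h
      simp only [] at this
      have := k.isLt
      omega
  have huniq : g = x'.orderEmbOfFin hx' := Finset.orderEmbOfFin_unique hx' hgx' hgmono
  refine ⟨⟨1 % N, Nat.mod_lt _ hN⟩, ?_⟩
  intro j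
  have hjr : (j + ⟨1 % N, Nat.mod_lt _ hN⟩).val = (j.val + 1) % N := by
    rw [Fin.add_def]
    simp only []
    rcases Nat.lt_or_ge N 2 with h2 | h2
    · have hN1 : N = 1 := by omega
      subst hN1
      omega
    · rw [Nat.mod_eq_of_lt h2]
  rw [← congrFun huniq (j + ⟨1 % N, Nat.mod_lt _ hN⟩), hg]
  simp only []
  by_cases hj : j.val = N - 1
  · have h0 : (j + ⟨1 % N, Nat.mod_lt _ hN⟩).val = 0 := by
      rw [hjr, hj]
      have : N - 1 + 1 = N := by omega
      rw [this, Nat.mod_self]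
    rw [dif_pos h0]
    have hfj : f j = a := by
      rw [show j = (⟨N - 1, by omega⟩ : Fin N) from Fin.ext hj]
      exact hlast
    rw [if_pos hfj, show (x.orderEmbOfFin hx) j = a from hfj]
    exact hcd
  · have hjlt : j.val + 1 < N := by have := j.isLt; omega
    have h0 : (j + ⟨1 % N, Nat.mod_lt _ hN⟩).val = j.val + 1 := by
      rw [hjr, Nat.mod_eq_of_lt hjlt]
    rw [dif_neg (by rw [h0]; omega)]
    have hjj : ∀ hpf : (j + (⟨1 % N, Nat.mod_lt _ hN⟩ : Fin N)).val - 1 < N,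
        f ⟨(j + (⟨1 % N, Nat.mod_lt _ hN⟩ : Fin N)).val - 1, hpf⟩ = (x.orderEmbOfFin hx) j := by
      intro hpf
      show (x.orderEmbOfFin hx) _ = _
      congr 1
      apply Fin.ext
      simp only [h0]
      omega
    rw [hjj, cycDist_self]
    exact Nat.zero_le _

lemma rel_wrapL {N : ℕ} (x x' : Finset (Fin L)) (hx : x.card = N) (hx' : x'.card = N)
    (a b : Fin L) (ha : a ∈ x) (hb : b ∉ x) (hdef : x' = insert b (x.erase a))
    (hav : a.val = 0) (hbv : b.val = L - 1) (hcd : cycDist a b ≤ 1) :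
    ∃ r : Fin N, ∀ j : Fin N, cycDist (x.orderEmbOfFin hx j) (x'.orderEmbOfFin hx' (j + r))
      ≤ (if x.orderEmbOfFin hx j = a then 1 else 0) := by
  classical
  have hN : 0 < N := by
    rw [← hx]; exact Finset.card_pos.mpr ⟨a, ha⟩
  set f : Fin N → Fin L := fun j => x.orderEmbOfFin hx j with hf
  have hmono : StrictMono f := (x.orderEmbOfFin hx).strictMono
  have hfx : ∀ j, f j ∈ x := fun j => x.orderEmbOfFin_mem hx j
  have hfb : ∀ j, f j ≠ b := fun j h => hb (h ▸ hfx j)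
  have hja : ∀ j : Fin N, f j = a → j.val = 0 := by
    intro j hj
    by_contra hne
    have hlt : j.val - 1 < N := by have := j.isLt; omega
    have hlt2 : (f ⟨j.val - 1, hlt⟩).val < (f j).val := by
      apply hmono
      rw [Fin.lt_def]
      simp only []
      omega
    rw [hj, hav] at hlt2
    omega
  obtain ⟨ja, hja0⟩ : ∃ ja, f ja = a := by
    have : a ∈ Set.range (x.orderEmbOfFin hx) := by
      rw [Finset.range_orderEmbOfFin]; exact ha
    exact this
  have hfirst : f ⟨0, hN⟩ = a := by
    have h1 := hja ja hja0
    rwa [show ja = (⟨0, hN⟩ : Fin N) from Fin.ext h1] at hja0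
  set g : Fin N → Fin L := fun k =>
    if hk : k.val = N - 1 then b else f ⟨k.val + 1, by have := k.isLt; omega⟩ with hg
  have hgmono : StrictMono g := by
    intro k k' hlt
    rw [Fin.lt_def] at hlt ⊢
    rw [hg]
    simp only []
    have hk'lt := k'.isLt
    by_cases h1 : k'.val = N - 1
    · have h2 : k.val ≠ N - 1 := by omega
      rw [dif_pos h1, dif_neg h2]
      have h3 := hfb ⟨k.val + 1, by have := k.isLt; omega⟩
      have h4 : (f ⟨k.val + 1, by have := k.isLt; omega⟩).val ≠ b.val :=
        fun h => h3 (Fin.ext h)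
      have h5 := (f ⟨k.val + 1, by have := k.isLt; omega⟩).isLt
      omega
    · have h2 : k.val ≠ N - 1 := by omega
      rw [dif_neg h1, dif_neg h2]
      apply hmono
      rw [Fin.lt_def]
      simp only []
      omega
  have hgx' : ∀ k, g k ∈ x' := by
    intro k
    rw [hdef, hg]
    simp only []
    by_cases h1 : k.val = N - 1
    · rw [dif_pos h1]; exact Finset.mem_insert_self _ _
    · rw [dif_neg h1]
      apply Finset.mem_insert_of_mem
      apply Finset.mem_erase.mpr
      refine ⟨?_, hfx _⟩
      intro h
      have := hja _ h
      simp only [] at this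
      omega
  have huniq : g = x'.orderEmbOfFin hx' := Finset.orderEmbOfFin_unique hx' hgx' hgmono
  refine ⟨⟨N - 1, by omega⟩, ?_⟩
  intro j
  have hjr : (j + ⟨N - 1, by omega⟩).val = (j.val + (N - 1)) % N := by
    rw [Fin.add_def]
  rw [← congrFun huniq (j + ⟨N - 1, by omega⟩), hg]
  simp only []
  by_cases hj : j.val = 0
  · have h0 : (j + ⟨N - 1, by omega⟩).val = N - 1 := by
      rw [hjr, hj, Nat.zero_add, Nat.mod_eq_of_lt (by omega)]
    rw [dif_pos h0]
    have hfj : f j = a := by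
      rw [show j = (⟨0, hN⟩ : Fin N) from Fin.ext hj]
      exact hfirst
    rw [if_pos hfj, show (x.orderEmbOfFin hx) j = a from hfj]
    exact hcd
  · have h0 : (j + ⟨N - 1, by omega⟩).val = j.val - 1 := by
      rw [hjr]
      have he : j.val + (N - 1) = (j.val - 1) + N := by omega
      rw [he, Nat.add_mod_right, Nat.mod_eq_of_lt (by have := j.isLt; omega)]
    have h1 : (j + ⟨N - 1, by omega⟩).val ≠ N - 1 := by
      rw [h0]
      have := j.isLt
      omega
    rw [dif_neg h1]
    have hjj : ∀ hpf : (j + (⟨N - 1, by omega⟩ : Fin N)).val + 1 < N,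
        f ⟨(j + (⟨N - 1, by omega⟩ : Fin N)).val + 1, hpf⟩ = (x.orderEmbOfFin hx) j := by
      intro hpf
      show (x.orderEmbOfFin hx) _ = _
      congr 1
      apply Fin.ext
      simp only [h0]
      have := j.isLt
      omega
    rw [hjj, cycDist_self]
    exact Nat.zero_le _

lemma rel_shift {N : ℕ} (x x' : Finset (Fin L)) (hx : x.card = N) (hx' : x'.card = N)
    (a b : Fin L) (ha : a ∈ x) (hb : b ∉ x) (hdef : x' = insert b (x.erase a))
    (hab : b = a + 1 ∨ a = b + 1) :
    ∃ r : Fin N, ∀ j : Fin N, cycDist (x.orderEmbOfFin hx j) (x'.orderEmbOfFin hx' (j + r))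
      ≤ (if x.orderEmbOfFin hx j = a then 1 else 0) := by
  have hN : 0 < N := by
    rw [← hx]; exact Finset.card_pos.mpr ⟨a, ha⟩
  have hL2 : 2 ≤ L := two_le_of_ne (a := a) (b := b) (fun h => hb (h ▸ ha))
  rcases hab with h | h
  · have hcd : cycDist a b ≤ 1 := by rw [h]; exact cycDist_add_one a
    have hbv : b.val = (a.val + 1) % L := by rw [h]; exact val_add_one a hL2
    rcases Nat.lt_or_ge (a.val + 1) L with h2 | h2
    · refine ⟨⟨0, hN⟩, fun j => ?_⟩
      have hz : j + ⟨0, hN⟩ = j := Fin.ext (by rw [Fin.add_def]; simp [Nat.mod_eq_of_lt j.isLt])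
      rw [hz]
      exact rel_mid x x' hx hx' a b ha hb hdef
        (Or.inl (by rw [hbv, Nat.mod_eq_of_lt h2])) hcd j
    · have hav : a.val = L - 1 := by have := a.isLt; omega
      exact rel_wrapR x x' hx hx' a b ha hb hdef hav
        (by rw [hbv]; have : a.val + 1 = L := by omega
            rw [this, Nat.mod_self]) hcd
  · have hba : b = a - 1 := by rw [h]; ring
    have hcd : cycDist a b ≤ 1 := by rw [hba]; exact cycDist_sub_one a
    have hav : a.val = (b.val + 1) % L := by rw [h]; exact val_add_one b hL2
    rcases Nat.lt_or_ge (b.val + 1) L with h2 | h2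
    · refine ⟨⟨0, hN⟩, fun j => ?_⟩
      have hz : j + ⟨0, hN⟩ = j := Fin.ext (by rw [Fin.add_def]; simp [Nat.mod_eq_of_lt j.isLt])
      rw [hz]
      exact rel_mid x x' hx hx' a b ha hb hdef
        (Or.inr (by rw [hav, Nat.mod_eq_of_lt h2])) hcd j
    · have hbv : b.val = L - 1 := by have := b.isLt; omega
      exact rel_wrapL x x' hx hx' a b ha hb hdef
        (by rw [hav]; have : b.val + 1 = L := by omega
            rw [this, Nat.mod_self]) hbv hcd

end G1

section G2
variable {L : ℕ} [NeZero L]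

def Cm {N : ℕ} (u y : Finset (Fin L)) (hu : u.card = N) (hy : y.card = N) : ℕ :=
  sInf {s : ℕ | ∃ σ : Equiv.Perm (Fin N), (∃ t : Fin N, ∀ j, σ j = j + t) ∧
    s = ∑ j : Fin N, cycDist (u.orderEmbOfFin hu j) (y.orderEmbOfFin hy (σ j))}

lemma id_is_shift {N : ℕ} (hN : 0 < N) :
    ∃ t : Fin N, ∀ j : Fin N, (Equiv.refl (Fin N)) j = j + t := by
  refine ⟨⟨0, hN⟩, fun j => ?_⟩
  apply Fin.ext
  rw [Fin.add_def]
  simp [Nat.mod_eq_of_lt j.isLt]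

lemma Cm_mem {N : ℕ} (hN : 0 < N) (u y : Finset (Fin L)) (hu : u.card = N) (hy : y.card = N) :
    ∃ σ : Equiv.Perm (Fin N), (∃ t : Fin N, ∀ j, σ j = j + t) ∧
      Cm u y hu hy = ∑ j : Fin N, cycDist (u.orderEmbOfFin hu j) (y.orderEmbOfFin hy (σ j)) := by
  have hne : {s : ℕ | ∃ σ : Equiv.Perm (Fin N), (∃ t : Fin N, ∀ j, σ j = j + t) ∧
      s = ∑ j : Fin N, cycDist (u.orderEmbOfFin hu j) (y.orderEmbOfFin hy (σ j))}.Nonempty :=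
    ⟨_, ⟨Equiv.refl _, id_is_shift hN, rfl⟩⟩
  exact Nat.sInf_mem hne

lemma Cm_self {N : ℕ} (hN : 0 < N) (y : Finset (Fin L)) (hy hy' : y.card = N) :
    Cm y y hy hy' = 0 := by
  have hmem : (0:ℕ) ∈ {s : ℕ | ∃ σ : Equiv.Perm (Fin N), (∃ t : Fin N, ∀ j, σ j = j + t) ∧
      s = ∑ j : Fin N, cycDist (y.orderEmbOfFin hy j) (y.orderEmbOfFin hy' (σ j))} := by
    refine ⟨Equiv.refl _, id_is_shift hN, ?_⟩
    have hz : ∀ j : Fin N, cycDist (y.orderEmbOfFin hy j) (y.orderEmbOfFin hy' ((Equiv.refl _) j)) = 0 := by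
      intro j
      have he : cycDist (y.orderEmbOfFin hy j) (y.orderEmbOfFin hy' ((Equiv.refl _) j))
          = cycDist (y.orderEmbOfFin hy j) (y.orderEmbOfFin hy j) := rfl
      rw [he, cycDist_self]
    rw [Finset.sum_congr rfl (fun j _ => hz j)]
    simp
  have := Nat.sInf_le hmem
  unfold Cm
  omega

lemma Cm_lip {N : ℕ} (x v y : Finset (Fin L)) (hxN : x.card = N) (hvN : v.card = N)
    (hy : y.card = N) (hadj : (hcGraph L).Adj x v) :
    Cm x y hxN hy ≤ Cm v y hvN hy + 1 := by
  classical
  obtain ⟨a, b, ha, hb, hvdef, hab⟩ := hc_adj_move hadj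
  have hN : 0 < N := by rw [← hxN]; exact Finset.card_pos.mpr ⟨a, ha⟩
  obtain ⟨r, hrel⟩ := rel_shift x v hxN hvN a b ha hb hvdef hab
  haveI : NeZero N := ⟨by omega⟩
  obtain ⟨σ', ⟨t', ht'⟩, hsum⟩ := Cm_mem hN v y hvN hy
  set σ : Equiv.Perm (Fin N) := (Equiv.addRight r).trans σ' with hσ
  have hσapp : ∀ j, σ j = σ' (j + r) := fun j => rfl
  have hσcyc : ∀ j, σ j = j + (r + t') := by
    intro j
    rw [hσapp, ht' (j + r), add_assoc]
  have h1 : Cm x y hxN hy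
      ≤ ∑ j : Fin N, cycDist (x.orderEmbOfFin hxN j) (y.orderEmbOfFin hy (σ j)) :=
    Nat.sInf_le ⟨σ, ⟨r + t', hσcyc⟩, rfl⟩
  have h2 : ∀ j : Fin N, cycDist (x.orderEmbOfFin hxN j) (y.orderEmbOfFin hy (σ j))
      ≤ (if x.orderEmbOfFin hxN j = a then 1 else 0)
        + cycDist (v.orderEmbOfFin hvN (j + r)) (y.orderEmbOfFin hy (σ' (j + r))) := by
    intro j
    calc cycDist (x.orderEmbOfFin hxN j) (y.orderEmbOfFin hy (σ j))
        ≤ cycDist (x.orderEmbOfFin hxN j) (v.orderEmbOfFin hvN (j + r))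
          + cycDist (v.orderEmbOfFin hvN (j + r)) (y.orderEmbOfFin hy (σ j)) :=
          cycDist_triangle _ _ _
      _ ≤ (if x.orderEmbOfFin hxN j = a then 1 else 0)
          + cycDist (v.orderEmbOfFin hvN (j + r)) (y.orderEmbOfFin hy (σ' (j + r))) := by
          rw [hσapp]
          exact Nat.add_le_add_right (hrel j) _
  have h3 : ∑ j : Fin N, cycDist (x.orderEmbOfFin hxN j) (y.orderEmbOfFin hy (σ j))
      ≤ 1 + ∑ j : Fin N, cycDist (v.orderEmbOfFin hvN (j + r)) (y.orderEmbOfFin hy (σ' (j + r))) := by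
    calc ∑ j : Fin N, cycDist (x.orderEmbOfFin hxN j) (y.orderEmbOfFin hy (σ j))
        ≤ ∑ j : Fin N, ((if x.orderEmbOfFin hxN j = a then 1 else 0)
          + cycDist (v.orderEmbOfFin hvN (j + r)) (y.orderEmbOfFin hy (σ' (j + r)))) :=
          Finset.sum_le_sum (fun j _ => h2 j)
      _ = (∑ j : Fin N, (if x.orderEmbOfFin hxN j = a then 1 else 0))
          + ∑ j : Fin N, cycDist (v.orderEmbOfFin hvN (j + r)) (y.orderEmbOfFin hy (σ' (j + r))) :=
          Finset.sum_add_distrib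
      _ ≤ 1 + ∑ j : Fin N, cycDist (v.orderEmbOfFin hvN (j + r)) (y.orderEmbOfFin hy (σ' (j + r))) := by
          have := sum_ite_emb_le_one x hxN a
          omega
  have h4 : ∑ j : Fin N, cycDist (v.orderEmbOfFin hvN (j + r)) (y.orderEmbOfFin hy (σ' (j + r)))
      = ∑ k : Fin N, cycDist (v.orderEmbOfFin hvN k) (y.orderEmbOfFin hy (σ' k)) := by
    rw [← Equiv.sum_comp (Equiv.addRight r)
      (fun k => cycDist (v.orderEmbOfFin hvN k) (y.orderEmbOfFin hy (σ' k)))]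
    apply Finset.sum_congr rfl
    intro j _
    simp
  omega

lemma Cm_le_len {N : ℕ} (hN : 0 < N) :
    ∀ {u y : Finset (Fin L)} (p : (hcGraph L).Walk u y) (hu : u.card = N) (hy : y.card = N),
      Cm u y hu hy ≤ p.length := by
  intro u y p
  induction p with
  | nil =>
    intro hu hy
    rw [Cm_self hN]
    exact Nat.zero_le _
  | @cons u v w hadj q ih =>
    intro hu hy
    have hvN : v.card = N := by rw [← hadj.1]; exact hu
    have h1 := Cm_lip u v w hu hvN hy hadj
    have h2 := ih hvN hy
    rw [SimpleGraph.Walk.length_cons]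
    omega

end G2

/-- The hard-core graph distance on the ring is the minimum over cyclic permutations
of the summed single-particle cycle distances, and this minimum coincides with the
minimum over all permutations. -/
theorem dist_eq_min_cyclic (L N : ℕ) [NeZero L] (hN : N < L)
    (x y : Finset (Fin L)) (hx : x.card = N) (hy : y.card = N) :
    dN L x y =
      sInf {s : ℕ | ∃ σ : Equiv.Perm (Fin N), (∃ t : Fin N, ∀ j, σ j = j + t) ∧
        s = ∑ j : Fin N, cycDist (x.orderEmbOfFin hx j) (y.orderEmbOfFin hy (σ j))} ∧
    sInf {s : ℕ | ∃ σ : Equiv.Perm (Fin N), (∃ t : Fin N, ∀ j, σ j = j + t) ∧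
        s = ∑ j : Fin N, cycDist (x.orderEmbOfFin hx j) (y.orderEmbOfFin hy (σ j))} =
      sInf {s : ℕ | ∃ σ : Equiv.Perm (Fin N),
        s = ∑ j : Fin N, cycDist (x.orderEmbOfFin hx j) (y.orderEmbOfFin hy (σ j))} := by
  classical
  rcases Nat.eq_zero_or_pos N with rfl | hN0
  · have hx0 : x = ∅ := Finset.card_eq_zero.mp hx
    have hy0 : y = ∅ := Finset.card_eq_zero.mp hy
    have hAe : {s : ℕ | ∃ σ : Equiv.Perm (Fin 0), (∃ t : Fin 0, ∀ j, σ j = j + t) ∧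
        s = ∑ j : Fin 0, cycDist (x.orderEmbOfFin hx j) (y.orderEmbOfFin hy (σ j))} = ∅ := by
      ext s
      simp only [Set.mem_setOf_eq, Set.mem_empty_iff_false, iff_false]
      rintro ⟨σ, ⟨t, -⟩, -⟩
      exact t.elim0
    have hBe : {s : ℕ | ∃ σ : Equiv.Perm (Fin 0),
        s = ∑ j : Fin 0, cycDist (x.orderEmbOfFin hx j) (y.orderEmbOfFin hy (σ j))} = {0} := by
      ext s
      simp only [Set.mem_setOf_eq, Set.mem_singleton_iff]
      constructor
      · rintro ⟨σ, rfl⟩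
        simp
      · rintro rfl
        exact ⟨Equiv.refl _, by simp⟩
    rw [hAe, hBe]
    have hd : dN L x y = 0 := by
      rw [hx0, hy0]
      unfold dN
      exact SimpleGraph.dist_self
    have hs1 : sInf (∅ : Set ℕ) = 0 := Nat.sInf_empty
    have hs2 : sInf ({0} : Set ℕ) = 0 := by
      rw [Nat.sInf_eq_zero]; left; rfl
    rw [hd, hs1, hs2]
    exact ⟨rfl, rfl⟩
  · have hcard : x.card = y.card := by rw [hx, hy]
    have hlt : x.card < L := by rw [hx]; exact hN
    obtain ⟨hdist, hreach⟩ := dN_eq_Ew hcard hlt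
    obtain ⟨p, hp⟩ := hreach.exists_walk_length_eq_dist
    have hCD : Cm x y hx hy ≤ (hcGraph L).dist x y := by
      have := Cm_le_len hN0 p hx hy
      omega
    have hBne : Set.Nonempty {s : ℕ | ∃ σ : Equiv.Perm (Fin N),
        s = ∑ j : Fin N, cycDist (x.orderEmbOfFin hx j) (y.orderEmbOfFin hy (σ j))} :=
      ⟨_, ⟨Equiv.refl _, rfl⟩⟩
    obtain ⟨σB, hσB⟩ := Nat.sInf_mem hBne
    have hEF : Ew x y ≤ sInf {s : ℕ | ∃ σ : Equiv.Perm (Fin N),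
        s = ∑ j : Fin N, cycDist (x.orderEmbOfFin hx j) (y.orderEmbOfFin hy (σ j))} := by
      rw [hσB]
      refine Ew_le_sum x y hcard _ _ (fun i => ind_mem_eq_sum x hx i) (fun i => ?_)
      rw [ind_mem_eq_sum y hy i]
      exact (Equiv.sum_comp σB (fun k => if i = y.orderEmbOfFin hy k then (1:ℤ) else 0)).symm
    have hFC : sInf {s : ℕ | ∃ σ : Equiv.Perm (Fin N),
        s = ∑ j : Fin N, cycDist (x.orderEmbOfFin hx j) (y.orderEmbOfFin hy (σ j))}
        ≤ Cm x y hx hy := by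
      obtain ⟨σC, -, hσC⟩ := Cm_mem hN0 x y hx hy
      exact Nat.sInf_le ⟨σC, hσC⟩
    have hg1 : dN L x y = Cm x y hx hy := by
      unfold dN
      omega
    have hg2 : Cm x y hx hy = sInf {s : ℕ | ∃ σ : Equiv.Perm (Fin N),
        s = ∑ j : Fin N, cycDist (x.orderEmbOfFin hx j) (y.orderEmbOfFin hy (σ j))} := by
      omega
    exact ⟨hg1, hg2⟩
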